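/- Suppose λ is a probability measure on a compact set K ⊆ ℝ^d satisfying the convolution estimate ‖λ ∗ f‖_{L^q(ℝ^d)} ≤ C ‖f‖_{L^p(ℝ^d)} for some 1 < p ≤ q < ∞ and all f ∈ L^p. Then for every Borel set F ⊆ ℝ^d of finite measure, m_d(F)^{q'/p'} ≤ C' · m_d(F + K), where p' and q' are the conjugate exponents of p and q. -/

import Mathlib

open MeasureTheory Metric Set
open scoped Pointwise ENNReal

theorem volume_sumset_from_convolution_bound (d : ℕ)
    (K : Set (EuclideanSpace ℝ (Fin d))) (hK : IsCompact K)
    (lam : Measure (EuclideanSpace ℝ (Fin d))) [IsProbabilityMeasure lam]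
    (hsupp : lam Kᶜ = 0)
    (p q C : ℝ) (hp : 1 < p) (hpq : p ≤ q) (hC : 0 < C)
    (hconv : ∀ f : EuclideanSpace ℝ (Fin d) → ℝ, Measurable f →
      eLpNorm (fun y => ∫ x, f (y - x) ∂lam) (ENNReal.ofReal q) volume ≤
        ENNReal.ofReal C * eLpNorm f (ENNReal.ofReal p) volume) :
    ∃ C' : ℝ, 0 < C' ∧ ∀ F : Set (EuclideanSpace ℝ (Fin d)), MeasurableSet F →
      volume F < ⊤ →
      volume F ^ ((q / (q - 1)) / (p / (p - 1))) ≤ ENNReal.ofReal C' * volume (F + K) := by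
  have hq1 : 1 < q := lt_of_lt_of_le hp hpq
  have hq0 : 0 < q := by linarith
  have hp0 : 0 < p := by linarith
  set q' : ℝ := q / (q - 1) with hq'def
  have hcq : q.HolderConjugate q' := Real.HolderConjugate.conjExponent hq1
  have hq'pos : 0 < q' := hcq.symm.pos
  have hepos : 0 < (q / (q - 1)) / (p / (p - 1)) :=
    div_pos hq'pos (div_pos hp0 (by linarith))
  refine ⟨C ^ q', Real.rpow_pos_of_pos hC _, ?_⟩
  intro F hF hFfin
  rcases eq_or_ne (volume (F + K)) ⊤ with hT | hTne
  · rw [hT, ENNReal.mul_top (by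
      simp only [ne_eq, ENNReal.ofReal_eq_zero, not_le]
      exact Real.rpow_pos_of_pos hC _)]
    exact le_top
  obtain ⟨T, hTsub, hTmeas, hTvol⟩ := exists_measurable_superset volume (F + K)
  have hTfin : volume T ≠ ⊤ := hTvol ▸ hTne
  -- the function L y = lam {x | y - x ∈ F}
  set L : EuclideanSpace ℝ (Fin d) → ℝ≥0∞ := fun y => lam ((fun x => y - x) ⁻¹' F) with hLdef
  have hpre : ∀ y : EuclideanSpace ℝ (Fin d), MeasurableSet ((fun x => y - x) ⁻¹' F) :=
    fun y => hF.preimage (measurable_const.sub measurable_id)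
  have hLmeas : Measurable L := by
    have hs : MeasurableSet {r : EuclideanSpace ℝ (Fin d) × EuclideanSpace ℝ (Fin d) |
        r.1 - r.2 ∈ F} := hF.preimage (measurable_fst.sub measurable_snd)
    exact measurable_measure_prodMk_left hs
  have hind : Measurable (F.indicator (1 : EuclideanSpace ℝ (Fin d) → ℝ≥0∞)) :=
    measurable_one.indicator hF
  -- total integral of L is volume F
  have key1 : ∫⁻ y, L y ∂volume = volume F := by
    have h1 : ∀ y, L y = ∫⁻ x, F.indicator 1 (y - x) ∂lam := by
      intro y
      simp only [hLdef]
      rw [← lintegral_indicator_one (hpre y)]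
      refine lintegral_congr fun x => ?_
      by_cases hx : y - x ∈ F <;> simp [Set.indicator_apply, hx]
    simp_rw [h1]
    have hswap : AEMeasurable
        (Function.uncurry fun y x => F.indicator (1 : EuclideanSpace ℝ (Fin d) → ℝ≥0∞) (y - x))
        (volume.prod lam) :=
      (hind.comp (measurable_fst.sub measurable_snd)).aemeasurable
    rw [lintegral_lintegral_swap hswap]
    simp_rw [lintegral_sub_right_eq_self (F.indicator (1 : EuclideanSpace ℝ (Fin d) → ℝ≥0∞)) _,
      lintegral_indicator_one hF]
    simp
  -- L vanishes outside T
  have hsuppL : ∀ y ∉ T, L y = 0 := by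
    intro y hy
    refine measure_mono_null ?_ hsupp
    intro x hx hxK
    simp only [Set.mem_preimage] at hx
    exact hy (hTsub (by simpa [sub_add_cancel] using Set.add_mem_add hx hxK))
  -- Hölder
  have holder : volume F ≤ (∫⁻ y, L y ^ q ∂volume) ^ (1/q) * volume T ^ (1/q') := by
    have hstep : volume F ≤ ∫⁻ y, L y * T.indicator 1 y ∂volume := by
      rw [← key1]
      refine lintegral_mono fun y => ?_
      by_cases hy : y ∈ T
      · simp [Set.indicator_of_mem hy]
      · simp [hsuppL y hy, Set.indicator_of_notMem hy]
    refine hstep.trans ?_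
    have h2 := ENNReal.lintegral_mul_le_Lp_mul_Lq volume hcq hLmeas.aemeasurable
      ((measurable_one.indicator hTmeas).aemeasurable)
    simp only [Pi.mul_apply] at h2
    refine h2.trans (le_of_eq ?_)
    congr 1
    have h3 : ∀ y, (T.indicator (1 : EuclideanSpace ℝ (Fin d) → ℝ≥0∞) y) ^ q' =
        T.indicator 1 y := by
      intro y
      by_cases hy : y ∈ T <;>
        simp [Set.indicator_apply, hy, ENNReal.zero_rpow_of_pos hq'pos]
    simp_rw [h3, lintegral_indicator_one hTmeas]
  -- relate to eLpNorm of the real convolution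
  set find : EuclideanSpace ℝ (Fin d) → ℝ := F.indicator (fun _ => (1:ℝ)) with hfind
  have hgL : ∀ y, (‖∫ x, find (y - x) ∂lam‖ₑ : ℝ≥0∞) = L y := by
    intro y
    have h4 : (fun x => find (y - x)) =
        ((fun x => y - x) ⁻¹' F).indicator (fun _ => (1:ℝ)) := by
      ext x
      by_cases hx : y - x ∈ F <;> simp [hfind, Set.indicator_apply, hx]
    rw [h4, integral_indicator_const (1:ℝ) (hpre y), smul_eq_mul, mul_one,
      Real.enorm_eq_ofReal measureReal_nonneg, Measure.real,
      ENNReal.ofReal_toReal (measure_ne_top lam _)]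
  have hqe0 : ENNReal.ofReal q ≠ 0 := by
    simp only [ne_eq, ENNReal.ofReal_eq_zero, not_le]; exact hq0
  have hpe0 : ENNReal.ofReal p ≠ 0 := by
    simp only [ne_eq, ENNReal.ofReal_eq_zero, not_le]; exact hp0
  have heLp : eLpNorm (fun y => ∫ x, find (y - x) ∂lam) (ENNReal.ofReal q) volume
      = (∫⁻ y, L y ^ q ∂volume) ^ (1/q) := by
    rw [eLpNorm_eq_lintegral_rpow_enorm_toReal hqe0 ENNReal.ofReal_ne_top,
      ENNReal.toReal_ofReal hq0.le]
    congr 1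
    exact lintegral_congr fun y => by rw [hgL y]
  have hindLp : eLpNorm find (ENNReal.ofReal p) volume = volume F ^ (1/p) := by
    rw [hfind, eLpNorm_indicator_const hF hpe0 ENNReal.ofReal_ne_top,
      ENNReal.toReal_ofReal hp0.le]
    simp
  have hbound : (∫⁻ y, L y ^ q ∂volume) ^ (1/q) ≤ ENNReal.ofReal C * volume F ^ (1/p) := by
    rw [← heLp, ← hindLp]
    exact hconv find (measurable_const.indicator hF)
  have main : volume F ≤ ENNReal.ofReal C * volume F ^ (1/p) * volume T ^ (1/q') :=
    holder.trans (mul_le_mul_left hbound _)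
  -- final algebra
  rcases eq_or_ne (volume F) 0 with hA0 | hA0
  · rw [hA0, ENNReal.zero_rpow_of_pos hepos]
    exact zero_le'
  have hAtop : volume F ≠ ⊤ := hFfin.ne
  have hAp0 : volume F ^ (1/p) ≠ 0 := by
    simp [ENNReal.rpow_eq_zero_iff, hA0, hAtop]
  have hAptop : volume F ^ (1/p) ≠ ⊤ := by
    simp [ENNReal.rpow_eq_top_iff, hA0, hAtop]
  have step : volume F ^ (1 - 1/p) ≤ ENNReal.ofReal C * volume T ^ (1/q') := by
    rw [ENNReal.rpow_sub _ _ hA0 hAtop, ENNReal.rpow_one,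
      ENNReal.div_le_iff hAp0 hAptop]
    calc volume F ≤ ENNReal.ofReal C * volume F ^ (1/p) * volume T ^ (1/q') := main
      _ = ENNReal.ofReal C * volume T ^ (1/q') * volume F ^ (1/p) := by ring
  have step2 := ENNReal.rpow_le_rpow step hq'pos.le
  rw [← ENNReal.rpow_mul, ENNReal.mul_rpow_of_nonneg _ _ hq'pos.le,
    ← ENNReal.rpow_mul, one_div_mul_cancel hq'pos.ne', ENNReal.rpow_one] at step2
  have hexp : (1 - 1/p) * q' = (q / (q - 1)) / (p / (p - 1)) := by
    rw [hq'def]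
    have h5 : p ≠ 0 := hp0.ne'
    have h6 : p - 1 ≠ 0 := by intro h; linarith [sub_eq_zero.mp h]
    have h7 : q - 1 ≠ 0 := by intro h; linarith [sub_eq_zero.mp h]
    field_simp
  have hC' : ENNReal.ofReal C ^ q' = ENNReal.ofReal (C ^ q') := by
    rw [← ENNReal.ofReal_rpow_of_pos hC]
  rw [hexp, hC', hTvol] at step2
  exact step2
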